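/- If F ∈ P satisfies M^k F = F for some k > 0, then for every p ≥ 0 each coefficient (a rational function of w) of the power series log(M^p F)(w,q) ∈ Q(w)[[q]] is O(w) as w → ∞, i.e. has degree at most 1 (numerator degree minus denominator degree ≤ 1). Moreover, the residue at w = 0 of log(M^p F)(w^{−1}, q) (taken coefficient-wise in q) is independent of p. -/

import Mathlib

open PowerSeries Polynomial

noncomputable section

/-- evaluation at `w = 0`, coefficientwise in `q`: `F(w,q) ↦ F(0,q)`. -/
def ev0 (F : PowerSeries (RatFunc ℚ)) : PowerSeries ℚ :=
  PowerSeries.mk fun d => RatFunc.eval (RingHom.id ℚ) 0 (PowerSeries.coeff d F)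

/-- the operator `M F = {1 + (q/w) d/dq}(F/F(0,q))`. -/
def Mop (F : PowerSeries (RatFunc ℚ)) : PowerSeries (RatFunc ℚ) :=
  PowerSeries.mk fun d =>
    (RatFunc.X + (d : RatFunc ℚ)) / RatFunc.X *
      PowerSeries.coeff d
        (F * PowerSeries.map (algebraMap ℚ (RatFunc ℚ)) (ev0 F)⁻¹)

/-- formal logarithm in `q` of a power series with constant term `1`. -/
def logPS (F : PowerSeries (RatFunc ℚ)) : PowerSeries (RatFunc ℚ) :=
  PowerSeries.mk fun d =>
    if d = 0 then 0
    else ∑ m ∈ Finset.Icc 1 d,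
      ((-1 : RatFunc ℚ) ^ (m + 1) / (m : RatFunc ℚ)) *
        PowerSeries.coeff d ((F - 1) ^ m)

/-- substitution `w ↦ w⁻¹` in a rational function. -/
def invSubst (f : RatFunc ℚ) : RatFunc ℚ :=
  RatFunc.eval (algebraMap ℚ (RatFunc ℚ)) RatFunc.X⁻¹ f

/-- the residue at `w = 0` of a rational function: the coefficient of `w^{-1}` in its
Laurent expansion at `0`. -/
def res0 (f : RatFunc ℚ) : ℚ := ((f : LaurentSeries ℚ)).coeff (-1)

end

/-! ### Auxiliary development -/

set_option linter.unusedSectionVars false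
set_option maxHeartbeats 1000000

noncomputable section ZZsec

namespace ZZ

open Finset

/-! #### Part 1: generic formal logarithm toolkit -/

variable {K : Type*} [Field K]

/-- generic formal log (same formula as `logPS`). -/
def glog (F : PowerSeries K) : PowerSeries K :=
  PowerSeries.mk fun d =>
    if d = 0 then 0
    else ∑ m ∈ Finset.Icc 1 d,
      ((-1 : K) ^ (m + 1) / (m : K)) * PowerSeries.coeff d ((F - 1) ^ m)

/-- `q d/dq`. -/
def qDer {R : Type*} [CommRing R] (F : PowerSeries R) : PowerSeries R :=
  PowerSeries.X * PowerSeries.derivativeFun F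

variable {R : Type*} [CommRing R]

lemma coeff_qDer (d : ℕ) (F : PowerSeries R) :
    PowerSeries.coeff d (qDer F) = (d : R) * PowerSeries.coeff d F := by
  rcases d with _ | d
  · simp [qDer]
  · rw [qDer, coeff_succ_X_mul, show F.derivativeFun = derivative R F from rfl, PowerSeries.coeff_derivative]
    push_cast; ring

lemma coeff_glog (d : ℕ) (F : PowerSeries K) :
    PowerSeries.coeff d (glog F) =
      if d = 0 then 0
      else ∑ m ∈ Finset.Icc 1 d,
        ((-1 : K) ^ (m + 1) / (m : K)) * PowerSeries.coeff d ((F - 1) ^ m) := coeff_mk _ _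

lemma coeff_glog_zero (F : PowerSeries K) : PowerSeries.coeff 0 (glog F) = 0 := by
  rw [coeff_glog]; simp

lemma qDer_add (f g : PowerSeries R) : qDer (f + g) = qDer f + qDer g := by
  ext d; simp [coeff_qDer, mul_add]

lemma qDer_sub (f g : PowerSeries R) : qDer (f - g) = qDer f - qDer g := by
  ext d; simp [coeff_qDer, mul_sub]

lemma qDer_one : qDer (1 : PowerSeries R) = 0 := by
  ext d
  rcases eq_or_ne d 0 with h | h <;> simp [coeff_qDer, h, PowerSeries.coeff_one]

lemma coeff_qDer_zero (F : PowerSeries R) : PowerSeries.coeff 0 (qDer F) = 0 := by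
  simp [coeff_qDer]

lemma qDer_mul (f g : PowerSeries R) : qDer (f * g) = f * qDer g + g * qDer f := by
  unfold qDer
  rw [derivativeFun_mul]
  simp only [smul_eq_mul]
  ring

lemma qDer_pow (Y : PowerSeries R) (m : ℕ) :
    qDer (Y ^ (m + 1)) = (m + 1 : ℕ) • (Y ^ m * qDer Y) := by
  induction m with
  | zero => simp
  | succ m ih =>
    have h : Y ^ (m + 1 + 1) = Y ^ (m + 1) * Y := by ring
    rw [h, qDer_mul, ih, mul_smul_comm, succ_nsmul]
    have h2 : Y * (Y ^ m * qDer Y) = Y ^ (m + 1) * qDer Y := by ring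
    rw [h2]
    simp only [add_smul, two_smul, one_smul, smul_eq_mul]
    abel

/-- coefficients below `m` of an `m`-th power of a series with zero constant term vanish. -/
lemma coeff_pow_eq_zero {Y : PowerSeries R} (hY : PowerSeries.constantCoeff Y = 0)
    {d m : ℕ} (hdm : d < m) : PowerSeries.coeff d (Y ^ m) = 0 := by
  have hX : (PowerSeries.X : PowerSeries R) ^ m ∣ Y ^ m :=
    pow_dvd_pow_of_dvd (PowerSeries.X_dvd_iff.mpr hY) m
  exact (PowerSeries.X_pow_dvd_iff.mp hX) d hdm

lemma qDer_sum {ι : Type*} (s : Finset ι) (f : ι → PowerSeries R) :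
    qDer (∑ i ∈ s, f i) = ∑ i ∈ s, qDer (f i) := by
  ext d; simp [coeff_qDer, Finset.mul_sum]

lemma qDer_C_mul (c : R) (f : PowerSeries R) :
    qDer (PowerSeries.C c * f) = PowerSeries.C c * qDer f := by
  ext d; simp only [coeff_qDer, PowerSeries.coeff_C_mul]; ring

lemma qDer_map {S : Type*} [CommRing S] (ρ : R →+* S) (f : PowerSeries R) :
    PowerSeries.map ρ (qDer f) = qDer (PowerSeries.map ρ f) := by
  ext d; simp [coeff_qDer, PowerSeries.coeff_map]

lemma coeff_glog_eq_partial {H : PowerSeries K} (hH : PowerSeries.constantCoeff H = 1)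
    {n e : ℕ} (he : e ≤ n) :
    PowerSeries.coeff e (glog H) =
      PowerSeries.coeff e
        (∑ m ∈ Finset.Icc 1 n, PowerSeries.C ((-1 : K) ^ (m + 1) / (m : K)) * (H - 1) ^ m) := by
  have hY : PowerSeries.constantCoeff (H - 1) = 0 := by
    rw [map_sub, hH, map_one, sub_self]
  rw [coeff_glog, map_sum]
  rcases eq_or_ne e 0 with rfl | he0
  · rw [if_pos rfl]
    symm
    apply Finset.sum_eq_zero
    intro m hm
    rw [PowerSeries.coeff_C_mul, coeff_pow_eq_zero hY (Finset.mem_Icc.mp hm).1, mul_zero]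
  · rw [if_neg he0]
    have hsub : Finset.Icc 1 e ⊆ Finset.Icc 1 n := Finset.Icc_subset_Icc le_rfl he
    have hext : ∀ m ∈ Finset.Icc 1 n, m ∉ Finset.Icc 1 e →
        ((-1 : K) ^ (m + 1) / (m : K)) * PowerSeries.coeff e ((H - 1) ^ m) = 0 := by
      intro m hm hme
      have h1 : 1 ≤ m := (Finset.mem_Icc.mp hm).1
      have : e < m := by
        by_contra hc
        exact hme (Finset.mem_Icc.mpr ⟨h1, not_lt.mp hc⟩)
      rw [coeff_pow_eq_zero hY this, mul_zero]
    rw [Finset.sum_subset hsub hext]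
    exact Finset.sum_congr rfl fun m _ => (PowerSeries.coeff_C_mul _ _ _).symm

lemma mul_qDer_glog  [CharZero K] {H : PowerSeries K} (hH : PowerSeries.constantCoeff H = 1) :
    H * qDer (glog H) = qDer H := by
  ext n
  rcases n with _ | n
  · have h2 : PowerSeries.coeff 0 (qDer H) = 0 := coeff_qDer_zero _
    have h1 : PowerSeries.constantCoeff (qDer (glog H)) = 0 := by
      rw [← PowerSeries.coeff_zero_eq_constantCoeff_apply]; exact coeff_qDer_zero _
    rw [h2, PowerSeries.coeff_zero_eq_constantCoeff_apply, map_mul, h1, mul_zero]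
  · set n1 := n + 1 with hn1
    have hn1pos : 1 ≤ n1 := Nat.succ_le_succ (Nat.zero_le n)
    set Y : PowerSeries K := H - 1 with hYdef
    have hY : PowerSeries.constantCoeff Y = 0 := by
      rw [hYdef, map_sub, hH, map_one, sub_self]
    set P : PowerSeries K :=
      ∑ m ∈ Finset.Icc 1 n1, PowerSeries.C ((-1 : K) ^ (m + 1) / (m : K)) * Y ^ m with hP
    have step1 : ∀ j ≤ n1,
        PowerSeries.coeff j (qDer (glog H)) = PowerSeries.coeff j (qDer P) := by
      intro j hj
      rw [coeff_qDer, coeff_qDer, coeff_glog_eq_partial hH hj]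
    have step2 : PowerSeries.coeff n1 (H * qDer (glog H)) =
        PowerSeries.coeff n1 (H * qDer P) := by
      rw [PowerSeries.coeff_mul, PowerSeries.coeff_mul]
      refine Finset.sum_congr rfl fun ij hij => ?_
      rw [Finset.HasAntidiagonal.mem_antidiagonal] at hij
      rw [step1 ij.2 (by omega)]
    have step3 : qDer P = (∑ j ∈ Finset.range n1, (-Y) ^ j) * qDer Y := by
      rw [hP, qDer_sum, ← Finset.Ico_add_one_right_eq_Icc, Finset.sum_Ico_eq_sum_range]
      have hrr : n1 + 1 - 1 = n1 := by omega
      rw [hrr, Finset.sum_mul]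
      refine Finset.sum_congr rfl fun i _ => ?_
      have hre : 1 + i = i + 1 := by omega
      rw [hre, qDer_C_mul, qDer_pow, mul_smul_comm, ← Nat.cast_smul_eq_nsmul K,
        ← PowerSeries.smul_eq_C_mul, smul_smul]
      have hc : ((i + 1 : ℕ) : K) * ((-1 : K) ^ (i + 1 + 1) / ((i + 1 : ℕ) : K)) = (-1 : K) ^ i := by
        have hne : ((i + 1 : ℕ) : K) ≠ 0 := Nat.cast_ne_zero.mpr (Nat.succ_ne_zero i)
        rw [mul_div_assoc', mul_comm, mul_div_assoc, div_self hne, mul_one]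
        have h9 : (-1 : K) ^ (i + 1 + 1) = (-1 : K) ^ i * (-1 : K) ^ 2 := by rw [← pow_add]
        rw [h9]; ring
      rw [hc, PowerSeries.smul_eq_C_mul, neg_pow Y i, ← mul_assoc]
      congr 1
      rw [map_pow, map_neg, map_one]
    have step4 : H * qDer P = (1 - (-Y) ^ n1) * qDer Y := by
      have gsm := geom_sum_mul (-Y) n1
      have hHY : H = 1 + Y := by rw [hYdef]; ring
      rw [step3, hHY]
      linear_combination (-(qDer Y)) * gsm
    have step5 : PowerSeries.coeff n1 ((1 - (-Y) ^ n1) * qDer Y) =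
        PowerSeries.coeff n1 (qDer Y) := by
      rw [sub_mul, one_mul, map_sub]
      have : PowerSeries.coeff n1 ((-Y) ^ n1 * qDer Y) = 0 := by
        rw [PowerSeries.coeff_mul]
        apply Finset.sum_eq_zero
        intro ij hij
        rw [Finset.HasAntidiagonal.mem_antidiagonal] at hij
        rcases lt_or_ge ij.1 n1 with h | h
        · have hnegY : PowerSeries.constantCoeff (-Y) = 0 := by rw [map_neg, hY, neg_zero]
          rw [coeff_pow_eq_zero hnegY h, zero_mul]
        · have hij1 : ij.1 = n1 := by omega
          have hij2 : ij.2 = 0 := by omega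
          rw [hij2, coeff_qDer]
          simp
      rw [this, sub_zero]
    have step6 : PowerSeries.coeff n1 (qDer Y) = PowerSeries.coeff n1 (qDer H) := by
      rw [hYdef, qDer_sub, qDer_one, sub_zero]
    rw [step2, step4, step5, step6]

lemma eq_of_qDer_eq  [CharZero K] {f g : PowerSeries K} (h0 : PowerSeries.coeff 0 f = PowerSeries.coeff 0 g)
    (h : qDer f = qDer g) : f = g := by
  ext d
  rcases d with _ | d
  · exact h0
  · have := congrArg (PowerSeries.coeff (d + 1)) h
    rw [coeff_qDer, coeff_qDer] at this
    have hne : ((d + 1 : ℕ) : K) ≠ 0 := Nat.cast_ne_zero.mpr (Nat.succ_ne_zero d)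
    exact mul_left_cancel₀ hne this

lemma glog_mul  [CharZero K] {A B : PowerSeries K} (hA : PowerSeries.constantCoeff A = 1)
    (hB : PowerSeries.constantCoeff B = 1) :
    glog (A * B) = glog A + glog B := by
  have hA0 : A ≠ 0 := fun h => one_ne_zero (by rw [← hA, h, map_zero] : (1 : K) = 0)
  have hB0 : B ≠ 0 := fun h => one_ne_zero (by rw [← hB, h, map_zero] : (1 : K) = 0)
  have hAB : PowerSeries.constantCoeff (A * B) = 1 := by rw [map_mul, hA, hB, mul_one]
  apply eq_of_qDer_eq
  · rw [coeff_glog_zero, map_add, coeff_glog_zero, coeff_glog_zero, add_zero]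
  · apply mul_left_cancel₀ (mul_ne_zero hA0 hB0)
    rw [mul_qDer_glog hAB, qDer_add, mul_add]
    have e1 : A * B * qDer (glog A) = B * (A * qDer (glog A)) := by ring
    have e2 : A * B * qDer (glog B) = A * (B * qDer (glog B)) := by ring
    rw [e1, e2, mul_qDer_glog hA, mul_qDer_glog hB, qDer_mul]
    ring

lemma glog_map [CharZero K] {L : Type*} [Field L] [CharZero L] (ρ : K →+* L) (F : PowerSeries K) :
    PowerSeries.map ρ (glog F) = glog (PowerSeries.map ρ F) := by
  ext d
  rw [PowerSeries.coeff_map, coeff_glog, coeff_glog]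
  rcases eq_or_ne d 0 with rfl | hd
  · simp
  · rw [if_neg hd, if_neg hd, map_sum]
    refine Finset.sum_congr rfl fun m _ => ?_
    rw [map_mul, map_div₀, map_pow, map_neg, map_one, map_natCast]
    congr 1
    rw [← PowerSeries.coeff_map, map_pow, map_sub, map_one]

/-! #### Part 2: expansion at infinity `RatFunc ℚ →+* LaurentSeries ℚ` -/

open HahnSeries

abbrev Lq := LaurentSeries ℚ

lemma charZero_KK : CharZero (RatFunc ℚ) :=
  charZero_of_injective_algebraMap (algebraMap ℚ (RatFunc ℚ)).injective

lemma charZero_Lq : CharZero Lq :=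
  charZero_of_injective_algebraMap (algebraMap ℚ (LaurentSeries ℚ)).injective

/-- polynomial evaluation at `w⁻¹`, landing in Laurent series. -/
def ψp : Polynomial ℚ →+* Lq :=
  Polynomial.eval₂RingHom (HahnSeries.C : ℚ →+* Lq) (HahnSeries.single (-1 : ℤ) 1)

lemma psi_coeff (p : Polynomial ℚ) (t : ℤ) :
    (ψp p).coeff t = if t ≤ 0 then p.coeff (-t).toNat else 0 := by
  rw [ψp, Polynomial.coe_eval₂RingHom, Polynomial.eval₂_eq_sum_range]
  have hcs : (∑ i ∈ Finset.range (p.natDegree + 1),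
      (HahnSeries.C : ℚ →+* Lq) (p.coeff i) * (HahnSeries.single (-1 : ℤ) 1) ^ i).coeff t
      = ∑ i ∈ Finset.range (p.natDegree + 1),
        ((HahnSeries.C : ℚ →+* Lq) (p.coeff i) * (HahnSeries.single (-1 : ℤ) 1) ^ i).coeff t :=
    map_sum (HahnSeries.coeff.addMonoidHom t) _ _
  rw [hcs]
  have hterm : ∀ i : ℕ,
      ((HahnSeries.C : ℚ →+* Lq) (p.coeff i) * (HahnSeries.single (-1 : ℤ) 1) ^ i)
        = HahnSeries.single (-(i : ℤ)) (p.coeff i) := by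
    intro i
    rw [single_pow, HahnSeries.C_apply, single_mul_single, zero_add, one_pow, mul_one]
    norm_num
  simp only [hterm]
  rcases le_or_gt t 0 with ht | ht
  · rw [if_pos ht]
    set n : ℕ := (-t).toNat with hn
    have htn : t = -(n : ℤ) := by omega
    have : ∀ i ∈ Finset.range (p.natDegree + 1),
        (HahnSeries.single (-(i : ℤ)) (p.coeff i)).coeff t
          = if i = n then p.coeff i else 0 := by
      intro i _
      rcases eq_or_ne i n with rfl | hne
      · rw [if_pos rfl, htn, coeff_single_same]
      · rw [if_neg hne, coeff_single_of_ne (by omega)]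
    rw [Finset.sum_congr rfl this, Finset.sum_ite_eq' (Finset.range (p.natDegree + 1)) n]
    split_ifs with hmem
    · rfl
    · have : p.natDegree < n := by
        simp only [Finset.mem_range] at hmem; omega
      exact (Polynomial.coeff_eq_zero_of_natDegree_lt this).symm
  · rw [if_neg (not_le.mpr ht)]
    apply Finset.sum_eq_zero
    intro i _
    exact coeff_single_of_ne (by omega)

lemma psi_ne {p : Polynomial ℚ} (hp : p ≠ 0) : ψp p ≠ 0 := by
  intro h
  have h2 : (ψp p).coeff (-(p.natDegree : ℤ)) = 0 := by rw [h]; rfl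
  rw [psi_coeff, if_pos (by omega)] at h2
  have h3 : (-(-(p.natDegree : ℤ))).toNat = p.natDegree := by omega
  rw [h3] at h2
  have h4 : p.leadingCoeff = 0 := by rw [Polynomial.leadingCoeff]; exact h2
  exact Polynomial.leadingCoeff_ne_zero.mpr hp h4

open scoped nonZeroDivisors in
lemma psi_hyp : (Polynomial ℚ)⁰ ≤ (Lq)⁰.comap ψp := by
  intro p hp
  exact Submonoid.mem_comap.mpr
    (mem_nonZeroDivisors_of_ne_zero (psi_ne (nonZeroDivisors.ne_zero hp)))

/-- expansion at infinity: `f(w) ↦ (Laurent expansion of f(1/w))`. -/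
def φR : RatFunc ℚ →+* Lq := RatFunc.liftRingHom ψp psi_hyp

lemma φR_apply (f : RatFunc ℚ) : φR f = ψp f.num / ψp f.denom := by
  have := RatFunc.liftRingHom_apply_div ψp psi_hyp f.num f.denom
  rw [RatFunc.num_div_denom] at this
  exact this

lemma single_one_inv : (HahnSeries.single (1 : ℤ) (1 : ℚ))⁻¹ = HahnSeries.single (-1 : ℤ) 1 := by
  apply inv_eq_of_mul_eq_one_right
  rw [single_mul_single, mul_one]
  norm_num [single_zero_one]

lemma single_neg_one_inv : (HahnSeries.single (-1 : ℤ) (1 : ℚ))⁻¹ = HahnSeries.single (1 : ℤ) 1 := by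
  rw [← single_one_inv, inv_inv]

open scoped RatFunc in
lemma coe_eval₂ (p : Polynomial ℚ) :
    ((Polynomial.eval₂ (algebraMap ℚ (RatFunc ℚ)) (RatFunc.X)⁻¹ p : RatFunc ℚ) : Lq) = ψp p := by
  have h := Polynomial.hom_eval₂ p (algebraMap ℚ (RatFunc ℚ)) (algebraMap (RatFunc ℚ) (LaurentSeries ℚ))
    (RatFunc.X)⁻¹
  have hx : (algebraMap (RatFunc ℚ) (LaurentSeries ℚ)) (RatFunc.X)⁻¹ = HahnSeries.single (-1 : ℤ) 1 := by
    rw [map_inv₀]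
    have h1 : (algebraMap (RatFunc ℚ) (LaurentSeries ℚ)) (RatFunc.X) = ((RatFunc.X : RatFunc ℚ) : Lq) := rfl
    rw [h1, RatFunc.coe_X, single_one_inv]
  have hc : (algebraMap (RatFunc ℚ) (LaurentSeries ℚ)).comp (algebraMap ℚ (RatFunc ℚ))
      = (HahnSeries.C : ℚ →+* Lq) := RingHom.ext_rat _ _
  have hL : ((Polynomial.eval₂ (algebraMap ℚ (RatFunc ℚ)) (RatFunc.X)⁻¹ p : RatFunc ℚ) : Lq)
      = (algebraMap (RatFunc ℚ) (LaurentSeries ℚ)) (Polynomial.eval₂ (algebraMap ℚ (RatFunc ℚ))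
        (RatFunc.X)⁻¹ p) := rfl
  rw [hL, h, hx, hc]
  rfl

lemma coe_invSubst (f : RatFunc ℚ) : ((invSubst f : RatFunc ℚ) : Lq) = φR f := by
  rw [invSubst, RatFunc.eval, map_div₀]
  rw [coe_eval₂ f.num, coe_eval₂ f.denom, φR_apply]

lemma res0_invSubst (f : RatFunc ℚ) : res0 (invSubst f) = (φR f).coeff (-1) := by
  rw [res0, coe_invSubst]

/-- `x` is `O(w^N)` at infinity: coefficients below `-N` vanish. -/
def OKg (N : ℤ) (x : Lq) : Prop := ∀ n : ℤ, n < -N → x.coeff n = 0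

lemma OKg_zero (N : ℤ) : OKg N 0 := fun _ _ => rfl

lemma OKg_mono {N M : ℤ} (h : N ≤ M) {x : Lq} (hx : OKg N x) : OKg M x :=
  fun n hn => hx n (by omega)

lemma OKg_add {N : ℤ} {x y : Lq} (hx : OKg N x) (hy : OKg N y) : OKg N (x + y) := by
  intro n hn
  rw [HahnSeries.coeff_add, hx n hn, hy n hn, add_zero]

lemma OKg_sum {ι : Type*} {N : ℤ} (s : Finset ι) (f : ι → Lq)
    (h : ∀ i ∈ s, OKg N (f i)) : OKg N (∑ i ∈ s, f i) := by
  classical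
  induction s using Finset.induction_on with
  | empty => simpa using OKg_zero N
  | insert _ _ hni ih =>
    rw [Finset.sum_insert hni]
    exact OKg_add (h _ (Finset.mem_insert_self _ _))
      (ih fun i hi => h i (Finset.mem_insert_of_mem hi))

lemma OKg_mul {N M : ℤ} {x y : Lq} (hx : OKg N x) (hy : OKg M y) : OKg (N + M) (x * y) := by
  intro n hn
  rw [HahnSeries.coeff_mul]
  apply Finset.sum_eq_zero
  intro ij hij
  rw [Finset.mem_addAntidiagonal] at hij
  obtain ⟨h1, h2, h3⟩ := hij
  by_cases hx1 : ij.1 < -N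
  · exact absurd (hx ij.1 hx1) h1
  · by_cases hy1 : ij.2 < -M
    · exact absurd (hy ij.2 hy1) h2
    · omega

lemma coeff_C_mulL (c : ℚ) (x : Lq) (n : ℤ) : (HahnSeries.C c * x).coeff n = c * x.coeff n := by
  rw [HahnSeries.C_apply]
  have h2 := coeff_single_mul_add (r := c) (x := x) (a := n) (b := (0 : ℤ))
  rw [add_zero] at h2
  exact h2

lemma OKg_C_mul {N : ℤ} (c : ℚ) {x : Lq} (hx : OKg N x) : OKg N (HahnSeries.C c * x) := by
  intro n hn
  rw [coeff_C_mulL, hx n hn, mul_zero]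

lemma coeff_C_ne {r : ℚ} {n : ℤ} (hn : n ≠ 0) : (HahnSeries.C r : Lq).coeff n = 0 := by
  rw [HahnSeries.C_apply]
  exact coeff_single_of_ne hn

lemma OKg_C {N : ℤ} (hN : 0 ≤ N) (c : ℚ) : OKg N (HahnSeries.C c : Lq) :=
  fun n hn => coeff_C_ne (by omega)

lemma coeff_single_pow_mul (m : ℕ) (x : Lq) (n : ℤ) :
    ((HahnSeries.single (1 : ℤ) (1 : ℚ)) ^ m * x).coeff n = x.coeff (n - m) := by
  rw [single_pow, one_pow]
  have h2 := coeff_single_mul_add (r := (1 : ℚ)) (x := x) (a := n - m) (b := (m • (1 : ℤ)))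
  rw [one_mul] at h2
  have h3 : (n - m) + (m • (1 : ℤ)) = n := by simp [nsmul_eq_mul]
  rw [h3] at h2
  exact h2

lemma phi_alg (r : ℚ) : φR (algebraMap ℚ (RatFunc ℚ) r) = HahnSeries.C r := by
  have : φR.comp (algebraMap ℚ (RatFunc ℚ)) = (HahnSeries.C : ℚ →+* Lq) := RingHom.ext_rat _ _
  exact congrFun (congrArg DFunLike.coe this) r

lemma phi_X : φR RatFunc.X = HahnSeries.single (-1 : ℤ) 1 := by
  rw [φR_apply, RatFunc.num_X, RatFunc.denom_X, map_one, div_one]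
  have h1 : ψp Polynomial.X = Polynomial.eval₂ (HahnSeries.C : ℚ →+* Lq)
      (HahnSeries.single (-1 : ℤ) 1) Polynomial.X := rfl
  rw [h1, Polynomial.eval₂_X]

lemma phi_Xinv : φR (RatFunc.X)⁻¹ = HahnSeries.single (1 : ℤ) 1 := by
  rw [map_inv₀, phi_X, single_neg_one_inv]

lemma OKg_psi_denom (p : Polynomial ℚ) : OKg (p.natDegree : ℤ) (ψp p) := by
  intro n hn
  rw [psi_coeff]
  split_ifs with h
  · apply Polynomial.coeff_eq_zero_of_natDegree_lt
    omega
  · rfl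

lemma deg_bound {f : RatFunc ℚ} (h : OKg 1 (φR f)) :
    f.num.natDegree ≤ f.denom.natDegree + 1 := by
  by_cases hf : f = 0
  · simp [hf, RatFunc.num_zero]
  have hn0 : f.num ≠ 0 := RatFunc.num_ne_zero hf
  by_contra hlt
  push_neg at hlt
  have heq : ψp f.num = φR f * ψp f.denom := by
    rw [φR_apply, div_mul_cancel₀]
    exact psi_ne f.denom_ne_zero
  have hcoeff : (ψp f.num).coeff (-(f.num.natDegree : ℤ))
      = (φR f * ψp f.denom).coeff (-(f.num.natDegree : ℤ)) := by rw [heq]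
  rw [psi_coeff, if_pos (by omega)] at hcoeff
  have hzero : (φR f * ψp f.denom).coeff (-(f.num.natDegree : ℤ)) = 0 := by
    have hOK : OKg (1 + (f.denom.natDegree : ℤ)) (φR f * ψp f.denom) :=
      OKg_mul h (OKg_psi_denom f.denom)
    apply hOK
    push_cast
    omega
  rw [hzero] at hcoeff
  have hnd : (-(-(f.num.natDegree : ℤ))).toNat = f.num.natDegree := by omega
  rw [hnd] at hcoeff
  have h4 : f.num.leadingCoeff = 0 := by rw [Polynomial.leadingCoeff]; exact hcoeff
  exact Polynomial.leadingCoeff_ne_zero.mpr hn0 h4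

lemma exists_OKg (x : Lq) : ∃ N : ℤ, 1 ≤ N ∧ OKg N x := by
  by_cases hx : x = 0
  · exact ⟨1, le_rfl, hx ▸ OKg_zero 1⟩
  · refine ⟨max 1 (-x.order), le_max_left _ _, fun n hn => ?_⟩
    apply HahnSeries.coeff_eq_zero_of_lt_order
    have : -max 1 (-x.order) ≤ x.order := by
      have := le_max_right 1 (-x.order)
      omega
    omega


lemma castC (m : ℕ) :
    ((-1 : Lq) ^ (m + 1) / ((m : ℕ) : Lq)) = HahnSeries.C ((-1 : ℚ) ^ (m + 1) / (m : ℚ)) := by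
  rw [map_div₀, map_pow, map_neg, map_one, map_natCast]

/-! #### Part 3: structure of the operator `Mop` -/

abbrev KK := RatFunc ℚ

lemma logPS_eq_glog (F : PowerSeries KK) : logPS F = glog F := rfl

def Hs (G : PowerSeries KK) : PowerSeries KK :=
  G * PowerSeries.map (algebraMap ℚ KK) (ev0 G)⁻¹

def Tt (G : PowerSeries KK) : PowerSeries KK :=
  1 + PowerSeries.C (RatFunc.X)⁻¹ * qDer (glog (Hs G))

lemma constC_ev0 {G : PowerSeries KK} (hG : PowerSeries.constantCoeff G = 1) :
    PowerSeries.constantCoeff (ev0 G) = 1 := by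
  rw [← PowerSeries.coeff_zero_eq_constantCoeff_apply, ev0, PowerSeries.coeff_mk,
    PowerSeries.coeff_zero_eq_constantCoeff_apply, hG]
  exact RatFunc.eval_one _ _

lemma constC_Iv {G : PowerSeries KK} (hG : PowerSeries.constantCoeff G = 1) :
    PowerSeries.constantCoeff (PowerSeries.map (algebraMap ℚ KK) (ev0 G)⁻¹) = 1 := by
  have h1 : PowerSeries.constantCoeff (PowerSeries.map (algebraMap ℚ KK) (ev0 G)⁻¹)
      = algebraMap ℚ KK (PowerSeries.constantCoeff (ev0 G)⁻¹) := rfl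
  rw [h1, PowerSeries.constantCoeff_inv, constC_ev0 hG, inv_one, map_one]

lemma constC_Hs {G : PowerSeries KK} (hG : PowerSeries.constantCoeff G = 1) :
    PowerSeries.constantCoeff (Hs G) = 1 := by
  rw [Hs, map_mul, hG, one_mul, constC_Iv hG]

lemma Mop_eq (G : PowerSeries KK) :
    Mop G = Hs G + PowerSeries.C (RatFunc.X)⁻¹ * qDer (Hs G) := by
  ext d
  rw [Mop, PowerSeries.coeff_mk, map_add, PowerSeries.coeff_C_mul, coeff_qDer]
  have hX : (RatFunc.X : KK) ≠ 0 := RatFunc.X_ne_zero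
  show (RatFunc.X + (d : KK)) / RatFunc.X * PowerSeries.coeff d (Hs G)
      = PowerSeries.coeff d (Hs G)
        + (RatFunc.X)⁻¹ * ((d : KK) * PowerSeries.coeff d (Hs G))
  field_simp

lemma constC_Mop {G : PowerSeries KK} (hG : PowerSeries.constantCoeff G = 1) :
    PowerSeries.constantCoeff (Mop G) = 1 := by
  have h1 : PowerSeries.coeff 0 (Mop G) = 1 := by
    rw [Mop_eq, map_add, PowerSeries.coeff_C_mul, coeff_qDer_zero, mul_zero, add_zero,
      PowerSeries.coeff_zero_eq_constantCoeff_apply, constC_Hs hG]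
  rw [← PowerSeries.coeff_zero_eq_constantCoeff_apply, h1]

lemma constC_Tt (G : PowerSeries KK) : PowerSeries.constantCoeff (Tt G) = 1 := by
  rw [← PowerSeries.coeff_zero_eq_constantCoeff_apply, Tt, map_add, PowerSeries.coeff_C_mul,
    coeff_qDer_zero, mul_zero, add_zero, PowerSeries.coeff_zero_eq_constantCoeff_apply, map_one]

lemma Mop_factor {G : PowerSeries KK} (hG : PowerSeries.constantCoeff G = 1) :
    Mop G = Hs G * Tt G := by
  haveI := charZero_KK
  have h := mul_qDer_glog (constC_Hs hG)
  rw [Mop_eq, Tt, mul_add, mul_one]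
  congr 1
  rw [mul_left_comm, h]

lemma glog_Mop {G : PowerSeries KK} (hG : PowerSeries.constantCoeff G = 1) :
    glog (Mop G) = glog G + PowerSeries.map (algebraMap ℚ KK) (glog ((ev0 G)⁻¹))
      + glog (Tt G) := by
  haveI := charZero_KK
  rw [Mop_factor hG, glog_mul (constC_Hs hG) (constC_Tt G), Hs,
    glog_mul hG (constC_Iv hG), ← glog_map]

lemma glog_Hs_eq {G : PowerSeries KK} (hG : PowerSeries.constantCoeff G = 1) :
    glog (Hs G) = glog G + PowerSeries.map (algebraMap ℚ KK) (glog ((ev0 G)⁻¹)) := by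
  haveI := charZero_KK
  rw [Hs, glog_mul hG (constC_Iv hG), ← glog_map]

/-! #### Part 4: the main induction -/

lemma PL {G : PowerSeries Lq} (h0 : PowerSeries.coeff 0 G = 0) {d : ℕ}
    (hlt : ∀ e, e < d → OKg 1 (PowerSeries.coeff e G)) :
    ∀ m : ℕ, 1 ≤ m → ∀ j, j ≤ d → (j < d ∨ 2 ≤ m) →
      OKg (m : ℤ) (PowerSeries.coeff j (G ^ m)) := by
  intro m
  induction m with
  | zero => omega
  | succ m ih =>
    intro _ j hj hcase
    rcases Nat.eq_zero_or_pos m with rfl | hm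
    · -- m + 1 = 1
      have hjd : j < d := by omega
      rw [pow_one]
      exact hlt j hjd
    · -- m ≥ 1
      rw [pow_succ, PowerSeries.coeff_mul]
      apply OKg_sum
      intro ij hij
      rw [Finset.HasAntidiagonal.mem_antidiagonal] at hij
      rcases Nat.eq_zero_or_pos ij.2 with h2z | h2p
      · -- second factor is coeff 0 G = 0
        have : PowerSeries.coeff ij.2 G = 0 := by rw [h2z]; exact h0
        rw [this, mul_zero]
        exact OKg_zero _
      · rcases eq_or_ne ij.2 d with h2d | h2d
        · -- then ij.1 = 0 and coeff 0 (G ^ m) = 0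
          have h1z : ij.1 = 0 := by omega
          have hc0 : PowerSeries.coeff ij.1 (G ^ m) = 0 := by
            rw [h1z, PowerSeries.coeff_zero_eq_constantCoeff_apply, map_pow,
              ← PowerSeries.coeff_zero_eq_constantCoeff_apply, h0, zero_pow (by omega)]
          rw [hc0, zero_mul]
          exact OKg_zero _
        · have h2lt : ij.2 < d := by omega
          have h1le : ij.1 ≤ d := by omega
          have h1lt : ij.1 < d := by omega
          have hOK1 : OKg (m : ℤ) (PowerSeries.coeff ij.1 (G ^ m)) :=
            ih hm ij.1 h1le (Or.inl h1lt)
          have hOK2 : OKg 1 (PowerSeries.coeff ij.2 G) := hlt ij.2 h2lt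
          have := OKg_mul hOK1 hOK2
          apply OKg_mono (by push_cast; omega) this

lemma downward (a : ℕ → ℤ → ℚ) (k : ℕ) (hk : 0 < k) (dq : ℚ) (hdq : dq ≠ 0)
    (hrec : ∀ p n, n < 0 → a (p + 1) n = a p n + dq * a p (n - 1))
    (hper : ∀ p n, a (p + k) n = a p n)
    (N0 : ℤ) (hN01 : 1 ≤ N0) (hbd : ∀ p n, n < -N0 → a p n = 0) :
    ∀ p n, n < -1 → a p n = 0 := by
  have step : ∀ N : ℤ, 2 ≤ N → (∀ p n, n < -N → a p n = 0) →
      ∀ p n, n < -(N - 1) → a p n = 0 := by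
    intro N hN2 hPN
    have hconst : ∀ q, a (q + 1) (-N) = a q (-N) := by
      intro q
      rw [hrec q (-N) (by omega), hPN q (-N - 1) (by omega), mul_zero, add_zero]
    have hconst' : ∀ i q, a (q + i) (-N) = a q (-N) := by
      intro i
      induction i with
      | zero => intro q; rfl
      | succ i ih =>
        intro q
        have h1 : q + (i + 1) = (q + i) + 1 := by omega
        rw [h1, hconst (q + i), ih q]
    have hlin : ∀ q i, a (q + i) (-N + 1) = a q (-N + 1) + (i : ℚ) * dq * a q (-N) := by
      intro q i
      induction i with
      | zero => simp
      | succ i ih =>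
        have h1 : q + (i + 1) = (q + i) + 1 := by omega
        rw [h1, hrec (q + i) (-N + 1) (by omega)]
        have h2 : (-N + 1 - 1) = -N := by ring
        rw [h2, hconst' i q, ih]
        push_cast
        ring
    have hzero : ∀ q, a q (-N) = 0 := by
      intro q
      have h1 := hlin q k
      rw [hper q (-N + 1)] at h1
      have h2 : (k : ℚ) * dq * a q (-N) = 0 := by linarith
      have hkq : (k : ℚ) ≠ 0 := Nat.cast_ne_zero.mpr (Nat.pos_iff_ne_zero.mp hk)
      rcases mul_eq_zero.mp h2 with h3 | h3
      · exact absurd h3 (mul_ne_zero hkq hdq)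
      · exact h3
    intro p n hn
    rcases eq_or_lt_of_le (show n ≤ -N by omega) with he | hl
    · rw [he]; exact hzero p
    · exact hPN p n hl
  have main : ∀ j : ℕ, ∀ p n, n < -1 → n < -(N0 - j) → a p n = 0 := by
    intro j
    induction j with
    | zero =>
      intro p n _ hn2
      exact hbd p n (by omega)
    | succ j ih =>
      intro p n hn1 hn2
      by_cases hc : n < -(N0 - j)
      · exact ih p n hn1 hc
      · have hN : 2 ≤ N0 - j := by omega
        have hstep := step (N0 - j) hN (fun p' n' hn' => ih p' n' (by omega) hn')
        exact hstep p n (by omega)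
  intro p n hn
  exact main (N0 + 1).toNat p n hn (by omega)

/-- the Laurent expansion at infinity of the `d`-th coefficient of `log (M^p F)`. -/
def uu (F : PowerSeries KK) (p d : ℕ) : Lq :=
  φR (PowerSeries.coeff d (glog (Mop^[p] F)))

lemma constC_iter {F : PowerSeries KK} (hF1 : PowerSeries.constantCoeff F = 1) :
    ∀ p, PowerSeries.constantCoeff (Mop^[p] F) = 1 := by
  intro p
  induction p with
  | zero => exact hF1
  | succ p ih =>
    rw [Function.iterate_succ_apply']
    exact constC_Mop ih

lemma uu_zero (F : PowerSeries KK) (p : ℕ) : uu F p 0 = 0 := by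
  rw [uu, coeff_glog_zero, map_zero]

lemma key {F : PowerSeries KK} (hF1 : PowerSeries.constantCoeff F = 1)
    {d : ℕ} (hd : 1 ≤ d)
    (hIH : ∀ e, e < d → ∀ q, OKg 1 (uu F q e)) (p : ℕ) :
    ∀ n : ℤ, n < 0 →
      (uu F (p + 1) d).coeff n = (uu F p d).coeff n + (d : ℚ) * (uu F p d).coeff (n - 1) := by
  haveI instKK := charZero_KK
  haveI instLq := charZero_Lq
  intro n hn
  set G : PowerSeries KK := Mop^[p] F with hGdef
  have hG : PowerSeries.constantCoeff G = 1 := constC_iter hF1 p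
  set W : PowerSeries Lq := PowerSeries.map φR (glog (Hs G)) with hWdef
  set D : PowerSeries Lq := qDer W with hDdef
  set c1 : ℕ → ℚ := fun e => PowerSeries.coeff e (glog ((ev0 G)⁻¹)) with hc1def
  -- coefficients of W
  have hWe : ∀ e : ℕ, PowerSeries.coeff e W = uu F p e + HahnSeries.C (c1 e) := by
    intro e
    rw [hWdef, PowerSeries.coeff_map, glog_Hs_eq hG, map_add, PowerSeries.coeff_map,
      map_add, phi_alg]
    rfl
  have hDe : ∀ e : ℕ, PowerSeries.coeff e D = (e : Lq) * PowerSeries.coeff e W :=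
    fun e => coeff_qDer e W
  have hDe0 : PowerSeries.coeff 0 D = 0 := coeff_qDer_zero _
  have hDlt : ∀ e, e < d → OKg 1 (PowerSeries.coeff e D) := by
    intro e he
    rw [hDe e, hWe e, ← map_natCast (HahnSeries.C : ℚ →+* Lq) e]
    exact OKg_C_mul _ (OKg_add (hIH e he p) (OKg_C (by norm_num) _))
  -- the image of T
  have hmapT : PowerSeries.map φR (Tt G)
      = 1 + PowerSeries.C (HahnSeries.single (1 : ℤ) (1 : ℚ)) * D := by
    rw [Tt, map_add, map_one, map_mul, PowerSeries.map_C, phi_Xinv, qDer_map, hDdef, hWdef]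
  -- coefficient of glog T, mapped
  have hT : φR (PowerSeries.coeff d (glog (Tt G)))
      = ∑ m ∈ Finset.Icc 1 d, HahnSeries.C ((-1 : ℚ) ^ (m + 1) / (m : ℚ))
          * ((HahnSeries.single (1 : ℤ) (1 : ℚ)) ^ m * PowerSeries.coeff d (D ^ m)) := by
    rw [← PowerSeries.coeff_map, glog_map φR, hmapT, coeff_glog, if_neg (by omega : d ≠ 0)]
    refine Finset.sum_congr rfl fun m hm => ?_
    have hsub : (1 + PowerSeries.C (HahnSeries.single (1 : ℤ) (1 : ℚ)) * D - 1)
        = PowerSeries.C (HahnSeries.single (1 : ℤ) (1 : ℚ)) * D := by ring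
    rw [hsub, mul_pow, ← map_pow, PowerSeries.coeff_C_mul, castC]
  -- the decomposition of uu F (p+1) d
  have htotal : uu F (p + 1) d = uu F p d + HahnSeries.C (c1 d)
      + ∑ m ∈ Finset.Icc 1 d, HahnSeries.C ((-1 : ℚ) ^ (m + 1) / (m : ℚ))
          * ((HahnSeries.single (1 : ℤ) (1 : ℚ)) ^ m * PowerSeries.coeff d (D ^ m)) := by
    rw [← hT, uu, Function.iterate_succ_apply', ← hGdef, glog_Mop hG, map_add, map_add,
      map_add, map_add, PowerSeries.coeff_map, phi_alg]
    rfl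
  -- coefficient computation at n
  have hsum : (∑ m ∈ Finset.Icc 1 d, HahnSeries.C ((-1 : ℚ) ^ (m + 1) / (m : ℚ))
        * ((HahnSeries.single (1 : ℤ) (1 : ℚ)) ^ m * PowerSeries.coeff d (D ^ m))).coeff n
      = (d : ℚ) * (uu F p d).coeff (n - 1) := by
    have hcs := map_sum (HahnSeries.coeff.addMonoidHom n)
      (fun m : ℕ => HahnSeries.C ((-1 : ℚ) ^ (m + 1) / (m : ℚ))
        * ((HahnSeries.single (1 : ℤ) (1 : ℚ)) ^ m * PowerSeries.coeff d (D ^ m)))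
      (Finset.Icc 1 d)
    have hterm : ∀ m ∈ Finset.Icc 1 d,
        (HahnSeries.C ((-1 : ℚ) ^ (m + 1) / (m : ℚ))
          * ((HahnSeries.single (1 : ℤ) (1 : ℚ)) ^ m * PowerSeries.coeff d (D ^ m))).coeff n
        = if m = 1 then (d : ℚ) * (uu F p d).coeff (n - 1) else 0 := by
      intro m hm
      rw [Finset.mem_Icc] at hm
      rcases eq_or_ne m 1 with rfl | hm1
      · rw [if_pos rfl, coeff_C_mulL, coeff_single_pow_mul, pow_one, hDe d, hWe d,
          ← map_natCast (HahnSeries.C : ℚ →+* Lq) d, coeff_C_mulL, HahnSeries.coeff_add,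
          coeff_C_ne (show n - (1 : ℕ) ≠ 0 by push_cast; omega)]
        push_cast
        norm_num
      · rw [if_neg hm1, coeff_C_mulL, coeff_single_pow_mul]
        have h2m : 2 ≤ m := by omega
        have hPLm := PL hDe0 hDlt m (by omega) d le_rfl (Or.inr h2m)
        rw [hPLm (n - m) (by push_cast; omega), mul_zero]
    calc (∑ m ∈ Finset.Icc 1 d, HahnSeries.C ((-1 : ℚ) ^ (m + 1) / (m : ℚ))
        * ((HahnSeries.single (1 : ℤ) (1 : ℚ)) ^ m * PowerSeries.coeff d (D ^ m))).coeff n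
        = ∑ m ∈ Finset.Icc 1 d, (HahnSeries.C ((-1 : ℚ) ^ (m + 1) / (m : ℚ))
          * ((HahnSeries.single (1 : ℤ) (1 : ℚ)) ^ m * PowerSeries.coeff d (D ^ m))).coeff n :=
          hcs
      _ = ∑ m ∈ Finset.Icc 1 d,
            (if m = 1 then (d : ℚ) * (uu F p d).coeff (n - 1) else 0) :=
          Finset.sum_congr rfl hterm
      _ = (d : ℚ) * (uu F p d).coeff (n - 1) := by
          rw [Finset.sum_ite_eq' (Finset.Icc 1 d) 1
            (fun _ => (d : ℚ) * (uu F p d).coeff (n - 1)),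
            if_pos (Finset.mem_Icc.mpr ⟨le_rfl, hd⟩)]
  have hfin := congrArg (fun x : Lq => x.coeff n) htotal
  simp only [HahnSeries.coeff_add] at hfin
  rw [hsum, coeff_C_ne (show n ≠ 0 by omega), add_zero] at hfin
  exact hfin

lemma uu_per {F : PowerSeries KK} {k : ℕ} (hper : Mop^[k] F = F) (p d : ℕ) :
    uu F (p + k) d = uu F p d := by
  rw [uu, uu]
  have : Mop^[p + k] F = Mop^[p] F := by
    rw [Function.iterate_add_apply, hper]
  rw [this]

lemma uu_mod {F : PowerSeries KK} {k : ℕ} (hk : 0 < k) (hper : Mop^[k] F = F) (p d : ℕ) :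
    uu F p d = uu F (p % k) d := by
  have haux : ∀ m r, uu F (r + k * m) d = uu F r d := by
    intro m
    induction m with
    | zero => intro r; simp
    | succ m ih =>
      intro r
      have h1 : r + k * (m + 1) = (r + k * m) + k := by ring
      rw [h1, uu_per hper, ih]
  conv_lhs => rw [← Nat.mod_add_div p k]
  exact haux (p / k) (p % k)

lemma main_lemma (F : PowerSeries KK) (k : ℕ) (hk : 0 < k)
    (hF1 : PowerSeries.constantCoeff F = 1)
    (hper : Mop^[k] F = F) :
    (∀ p d : ℕ, OKg 1 (uu F p d)) ∧
    (∀ p d : ℕ, (uu F p d).coeff (-1) = (uu F 0 d).coeff (-1)) := by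
  have part1 : ∀ d p, OKg 1 (uu F p d) := by
    intro d
    induction d using Nat.strong_induction_on with
    | _ d IH =>
      rcases Nat.eq_zero_or_pos d with rfl | hd
      · intro p
        rw [uu_zero]
        exact OKg_zero 1
      · have hbd : ∃ N : ℤ, 1 ≤ N ∧ ∀ p, OKg N (uu F p d) := by
          have hex : ∀ j : ℕ, ∃ N, 1 ≤ N ∧ OKg N (uu F j d) := fun j => exists_OKg _
          choose f hf1 hf2 using hex
          have hne : (Finset.range k).Nonempty := ⟨0, Finset.mem_range.mpr hk⟩
          refine ⟨(Finset.range k).sup' hne f,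
            le_trans (hf1 0) (Finset.le_sup' f (Finset.mem_range.mpr hk)), ?_⟩
          intro p
          have hmem : p % k ∈ Finset.range k := Finset.mem_range.mpr (Nat.mod_lt p hk)
          rw [uu_mod hk hper p d]
          exact OKg_mono (Finset.le_sup' f hmem) (hf2 (p % k))
        obtain ⟨N0, hN01, hbd'⟩ := hbd
        have hrec := key hF1 hd (fun e he q => IH e he q)
        have hdq : ((d : ℚ)) ≠ 0 := Nat.cast_ne_zero.mpr (by omega)
        have hdown := downward (fun p n => (uu F p d).coeff n) k hk (d : ℚ) hdq
          (fun p n hn => hrec p n hn)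
          (fun p n => by
            show (uu F (p + k) d).coeff n = (uu F p d).coeff n
            rw [uu_per hper])
          N0 hN01 (fun p n hn => hbd' p n hn)
        intro p n hn
        exact hdown p n hn
  refine ⟨fun p d => part1 d p, ?_⟩
  intro p d
  induction p with
  | zero => rfl
  | succ p ih =>
    rcases Nat.eq_zero_or_pos d with rfl | hd
    · rw [uu_zero, uu_zero]
    · have hr := key hF1 hd (fun e _ q => part1 e q) p (-1) (by omega)
      have hz : (uu F p d).coeff (-1 - 1) = 0 := part1 d p (-1 - 1) (by omega)
      rw [hr, hz, mul_zero, add_zero, ih]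

end ZZ
end ZZsec

theorem log_MpF_regularity (F : PowerSeries (RatFunc ℚ)) (k : ℕ) (hk : 0 < k)
    (hF1 : PowerSeries.coeff 0 F = 1)
    (hFhol : ∀ d, ((PowerSeries.coeff d F).denom.eval 0) ≠ 0)
    (hper : Mop^[k] F = F) :
    (∀ p d : ℕ,
        (PowerSeries.coeff d (logPS (Mop^[p] F))).num.natDegree
          ≤ (PowerSeries.coeff d (logPS (Mop^[p] F))).denom.natDegree + 1) ∧
    (∀ p d : ℕ,
        res0 (invSubst (PowerSeries.coeff d (logPS (Mop^[p] F))))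
          = res0 (invSubst (PowerSeries.coeff d (logPS F)))) := by
  have hF1' : PowerSeries.constantCoeff F = 1 := by
    rw [← PowerSeries.coeff_zero_eq_constantCoeff_apply]; exact hF1
  obtain ⟨h1, h2⟩ := ZZ.main_lemma F k hk hF1' hper
  constructor
  · intro p d
    exact ZZ.deg_bound (h1 p d)
  · intro p d
    rw [ZZ.res0_invSubst, ZZ.res0_invSubst]
    exact h2 p d
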